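/- arXiv:1501.07440 — 2 statements merged into one kernel-verified Lean document; each statement's English description precedes it below -/
import Mathlib

section
/- (Proposition 1, reduced form.) Let σ > 0, a > 0, n ≥ 1, and δ > 0. Let (Z₁ᵢ, Z₂ᵢ)_{i=1,…,n} be i.i.d. pairs of independent standard normal random variables and set Wᵢ := (a²/(2(σ² + a²))) · (Z₂ᵢ² − Z₁ᵢ²) + (σa/(σ² + a²)) · Z₁ᵢZ₂ᵢ and α := 2a(σ + a)/(σ² + a²). Then P[ | Σ_{i=1}^n Wᵢ | ≥ nδ ] ≤ 2 · exp( − δ²n / ( 2(4α² + δα) ) ). -/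
open MeasureTheory ProbabilityTheory Real
open scoped NNReal ENNReal

lemma std_gauss_density :
    (gaussianReal 0 1 : Measure ℝ)
      = volume.withDensity fun x => ((gaussianPDFReal 0 1 x).toNNReal : ℝ≥0∞) := by
  rw [gaussianReal_of_var_ne_zero 0 one_ne_zero]
  rfl

lemma integral_std_gauss (g : ℝ → ℝ) :
    ∫ y, g y ∂(gaussianReal 0 1) = ∫ y, gaussianPDFReal 0 1 y * g y := by
  rw [std_gauss_density, integral_withDensity_eq_integral_smul
    ((measurable_gaussianPDFReal 0 1).real_toNNReal) g]
  congr 1 with y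
  simp [NNReal.smul_def, Real.coe_toNNReal _ (gaussianPDFReal_nonneg 0 1 y)]

lemma integrable_std_gauss_iff (g : ℝ → ℝ) :
    Integrable g (gaussianReal 0 1) ↔ Integrable (fun y => gaussianPDFReal 0 1 y * g y) volume := by
  rw [std_gauss_density, integrable_withDensity_iff_integrable_smul
    ((measurable_gaussianPDFReal 0 1).real_toNNReal)]
  constructor <;> intro h <;> refine h.congr (Filter.Eventually.of_forall fun y => ?_) <;>
    simp [NNReal.smul_def, Real.coe_toNNReal _ (gaussianPDFReal_nonneg 0 1 y)]

lemma pdf_mul_eq (s r : ℝ) (y : ℝ) :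
    gaussianPDFReal 0 1 y * rexp (s * y^2 + r * y)
      = (Real.sqrt (2 * π))⁻¹ * rexp (-(1/2 - s) * y^2 + r * y) := by
  rw [gaussianPDFReal]
  push_cast
  rw [mul_assoc, ← Real.exp_add]
  ring_nf

lemma complete_square {b : ℝ} (hb : 0 < b) (r y : ℝ) :
    rexp (-b * y^2 + r * y) = rexp (r^2 / (4*b)) * rexp (-b * (y - r/(2*b))^2) := by
  rw [← Real.exp_add]
  congr 1
  field_simp
  ring

lemma integrable_exp_quad {b : ℝ} (hb : 0 < b) (r : ℝ) :
    Integrable (fun y => rexp (-b * y^2 + r * y)) volume := by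
  have : Integrable (fun y : ℝ => rexp (r^2 / (4*b)) * rexp (-b * (y - r/(2*b))^2)) volume := by
    refine Integrable.const_mul ?_ _
    exact (integrable_exp_neg_mul_sq hb).comp_sub_right _
  exact this.congr (Filter.Eventually.of_forall fun y => (complete_square hb r y).symm)

lemma integral_exp_quad {b : ℝ} (hb : 0 < b) (r : ℝ) :
    ∫ y, rexp (-b * y^2 + r * y) = rexp (r^2 / (4*b)) * Real.sqrt (π / b) := by
  calc ∫ y, rexp (-b * y^2 + r * y)
      = ∫ y, rexp (r^2 / (4*b)) * rexp (-b * (y - r/(2*b))^2) :=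
        integral_congr_ae (Filter.Eventually.of_forall fun y => complete_square hb r y)
    _ = rexp (r^2 / (4*b)) * ∫ y, rexp (-b * (y - r/(2*b))^2) := integral_const_mul _ _
    _ = rexp (r^2 / (4*b)) * ∫ y, rexp (-b * y^2) := by
        rw [integral_sub_right_eq_self (fun y => rexp (-b * y^2)) (r/(2*b))]
    _ = rexp (r^2 / (4*b)) * Real.sqrt (π / b) := by rw [integral_gaussian]

lemma integrable_oneD {s : ℝ} (hs : s < 1/2) (r : ℝ) :
    Integrable (fun y => rexp (s * y^2 + r * y)) (gaussianReal 0 1) := by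
  rw [integrable_std_gauss_iff]
  have hb : 0 < 1/2 - s := by linarith
  have := ((integrable_exp_quad hb r).const_mul (Real.sqrt (2 * π))⁻¹)
  exact this.congr (Filter.Eventually.of_forall fun y => (pdf_mul_eq s r y).symm)

lemma integral_oneD {s : ℝ} (hs : s < 1/2) (r : ℝ) :
    ∫ y, rexp (s * y^2 + r * y) ∂(gaussianReal 0 1)
      = (Real.sqrt (1 - 2*s))⁻¹ * rexp (r^2 / (2*(1 - 2*s))) := by
  have hb : 0 < 1/2 - s := by linarith
  rw [integral_std_gauss]
  calc ∫ y, gaussianPDFReal 0 1 y * rexp (s * y^2 + r * y)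
      = ∫ y, (Real.sqrt (2 * π))⁻¹ * rexp (-(1/2 - s) * y^2 + r * y) :=
        integral_congr_ae (Filter.Eventually.of_forall fun y => pdf_mul_eq s r y)
    _ = (Real.sqrt (2 * π))⁻¹ * (rexp (r^2 / (4*(1/2 - s))) * Real.sqrt (π / (1/2 - s))) := by
        rw [integral_const_mul, integral_exp_quad hb]
    _ = (Real.sqrt (1 - 2*s))⁻¹ * rexp (r^2 / (2*(1 - 2*s))) := by
        have key : (Real.sqrt (2 * π))⁻¹ * Real.sqrt (π / (1/2 - s)) = (Real.sqrt (1 - 2*s))⁻¹ := by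
          rw [← Real.sqrt_inv, ← Real.sqrt_mul (by positivity) (π / (1/2 - s)), ← Real.sqrt_inv]
          congr 1
          have hπ : π ≠ 0 := Real.pi_ne_zero
          have hs2 : (1 : ℝ) - 2*s ≠ 0 := by linarith
          field_simp
        have h2 : 4*(1/2 - s) = 2*(1 - 2*s) := by ring
        rw [h2, ← key]
        ring

lemma twoD {c d t : ℝ} (htc : t * c < 1/2) (hQ : t^2 * (4*c^2 + d^2) < 1) :
    Integrable (fun p : ℝ × ℝ => rexp (t * (c * (p.2^2 - p.1^2) + d * (p.1 * p.2))))
      ((gaussianReal 0 1).prod (gaussianReal 0 1)) ∧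
    ∫ p, rexp (t * (c * (p.2^2 - p.1^2) + d * (p.1 * p.2)))
        ∂((gaussianReal 0 1).prod (gaussianReal 0 1))
      = (Real.sqrt (1 - t^2 * (4*c^2 + d^2)))⁻¹ := by
  set γ : Measure ℝ := gaussianReal 0 1 with hγ
  set s : ℝ := t * c with hsdef
  have hs : s < 1/2 := htc
  have h2s : 0 < 1 - 2*s := by linarith
  obtain ⟨s', hs'def⟩ : ∃ z : ℝ, z = t^2*d^2 / (2*(1 - 2*s)) - t*c := ⟨_, rfl⟩
  have key : (1 - 2*s) * (1 - 2*s') = 1 - t^2 * (4*c^2 + d^2) := by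
    rw [hs'def, hsdef]
    have hne : (1:ℝ) - 2*(t*c) ≠ 0 := by rw [← hsdef]; exact h2s.ne'
    have hne2 : (1:ℝ) - t*c*2 ≠ 0 := by intro h; apply hne; linarith
    have h := div_mul_cancel₀ (t^2*d^2) (mul_ne_zero (two_ne_zero (α := ℝ)) hne)
    linear_combination (-1 : ℝ) * h
  have h2s' : 0 < 1 - 2*s' := by
    rcases lt_or_ge 0 (1 - 2*s') with h|h
    · exact h
    · exfalso; nlinarith [mul_nonneg h2s.le (neg_nonneg.2 h)]
  have hs' : s' < 1/2 := by linarith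
  have eq1 : ∀ x y : ℝ, rexp (t * (c * (y^2 - x^2) + d * (x * y)))
      = rexp (-(t*c) * x^2) * rexp (s * y^2 + (t*d*x) * y) := by
    intro x y
    rw [← Real.exp_add]
    congr 1
    rw [hsdef]; ring
  have eq2 : ∀ x : ℝ, rexp (-(t*c) * x^2) * ((Real.sqrt (1 - 2*s))⁻¹
        * rexp ((t*d*x)^2 / (2*(1 - 2*s))))
      = (Real.sqrt (1 - 2*s))⁻¹ * rexp (s' * x^2 + 0 * x) := by
    intro x
    rw [mul_left_comm, ← Real.exp_add]
    congr 2
    rw [hs'def]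
    field_simp
    ring
  have hinner : ∀ x : ℝ, ∫ y, rexp (t * (c * (y^2 - x^2) + d * (x * y))) ∂γ
      = (Real.sqrt (1 - 2*s))⁻¹ * rexp (s' * x^2 + 0 * x) := by
    intro x
    calc ∫ y, rexp (t * (c * (y^2 - x^2) + d * (x * y))) ∂γ
        = ∫ y, rexp (-(t*c) * x^2) * rexp (s * y^2 + (t*d*x) * y) ∂γ :=
          integral_congr_ae (Filter.Eventually.of_forall fun y => eq1 x y)
      _ = rexp (-(t*c) * x^2) * ∫ y, rexp (s * y^2 + (t*d*x) * y) ∂γ := integral_const_mul _ _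
      _ = rexp (-(t*c) * x^2) * ((Real.sqrt (1 - 2*s))⁻¹ * rexp ((t*d*x)^2 / (2*(1 - 2*s)))) := by
          rw [integral_oneD hs]
      _ = (Real.sqrt (1 - 2*s))⁻¹ * rexp (s' * x^2 + 0 * x) := eq2 x
  have hcont : Continuous fun p : ℝ × ℝ => rexp (t * (c * (p.2^2 - p.1^2) + d * (p.1 * p.2))) := by
    fun_prop
  have hInt : Integrable (fun p : ℝ × ℝ => rexp (t * (c * (p.2^2 - p.1^2) + d * (p.1 * p.2))))
      (γ.prod γ) := by
    rw [integrable_prod_iff (hcont.aestronglyMeasurable)]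
    constructor
    · refine Filter.Eventually.of_forall fun x => ?_
      have := (integrable_oneD hs (t*d*x)).const_mul (rexp (-(t*c) * x^2))
      exact this.congr (Filter.Eventually.of_forall fun y => (eq1 x y).symm)
    · have hval : (fun x : ℝ => ∫ y, ‖rexp (t * (c * (y^2 - x^2) + d * (x*y)))‖ ∂γ)
          = fun x : ℝ => (Real.sqrt (1 - 2*s))⁻¹ * rexp (s' * x^2 + 0 * x) := by
        funext x
        rw [← hinner x]
        exact integral_congr_ae (Filter.Eventually.of_forall fun y => by
          simp [Real.norm_eq_abs, abs_of_pos (Real.exp_pos _)])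
      show Integrable (fun x : ℝ => ∫ y, ‖rexp (t * (c * (y^2 - x^2) + d * (x*y)))‖ ∂γ) γ
      rw [hval]
      exact (integrable_oneD hs' 0).const_mul _
  refine ⟨hInt, ?_⟩
  rw [MeasureTheory.integral_prod _ hInt]
  calc ∫ x, ∫ y, rexp (t * (c * (y^2 - x^2) + d * (x * y))) ∂γ ∂γ
      = ∫ x, (Real.sqrt (1 - 2*s))⁻¹ * rexp (s' * x^2 + 0 * x) ∂γ :=
        integral_congr_ae (Filter.Eventually.of_forall fun x => hinner x)
    _ = (Real.sqrt (1 - 2*s))⁻¹ * ((Real.sqrt (1 - 2*s'))⁻¹ * rexp (0^2 / (2*(1 - 2*s')))) := by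
        rw [integral_const_mul, integral_oneD hs']
    _ = (Real.sqrt (1 - t^2 * (4*c^2 + d^2)))⁻¹ := by
        rw [← key, Real.sqrt_mul h2s.le, mul_inv]
        norm_num

lemma pi_prod_aux {α : Type*} [MeasurableSpace α] (ν : Measure α) [IsProbabilityMeasure ν]
    {g : α → ℝ} (hg : Integrable g ν) :
    ∀ n : ℕ, Integrable (fun x : Fin n → α => ∏ i, g (x i)) (Measure.pi fun _ => ν) ∧
      ∫ x : Fin n → α, ∏ i, g (x i) ∂(Measure.pi fun _ => ν) = (∫ x, g x ∂ν) ^ n := by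
  intro n
  induction n with
  | zero =>
      constructor
      · simp only [Finset.univ_eq_empty, Finset.prod_empty]
        exact integrable_const _
      · simp
  | succ n ih =>
      have MP := (measurePreserving_piFinSuccAbove (fun _ : Fin (n+1) => ν) 0).symm
      constructor
      · rw [← MP.integrable_comp_emb (MeasurableEquiv.measurableEmbedding _)]
        have : (fun x : Fin (n+1) → α => ∏ i, g (x i)) ∘
              (MeasurableEquiv.piFinSuccAbove (fun _ => α) 0).symm
            = fun p : α × (Fin n → α) => g p.1 * ∏ i, g (p.2 i) := by
          funext p
          simp only [Function.comp_apply, MeasurableEquiv.piFinSuccAbove_symm_apply,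
            Fin.insertNthEquiv, Equiv.coe_fn_mk, Fin.insertNth_zero]
          rw [Fin.prod_univ_succ]
          simp [Fin.cons_zero, Fin.cons_succ, Fin.zero_succAbove]
        rw [this]
        exact hg.mul_prod ih.1
      · rw [← MP.integral_comp']
        have : (fun x : Fin (n+1) → α => ∏ i, g (x i)) ∘
              (MeasurableEquiv.piFinSuccAbove (fun _ => α) 0).symm
            = fun p : α × (Fin n → α) => g p.1 * ∏ i, g (p.2 i) := by
          funext p
          simp only [Function.comp_apply, MeasurableEquiv.piFinSuccAbove_symm_apply,
            Fin.insertNthEquiv, Equiv.coe_fn_mk, Fin.insertNth_zero]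
          rw [Fin.prod_univ_succ]
          simp [Fin.cons_zero, Fin.cons_succ, Fin.zero_succAbove]
        calc ∫ p : α × (Fin n → α), ((fun x : Fin (n+1) → α => ∏ i, g (x i)) ∘
              (MeasurableEquiv.piFinSuccAbove (fun _ => α) 0).symm) p
              ∂(ν.prod (Measure.pi fun _ => ν))
            = ∫ p : α × (Fin n → α), g p.1 * ∏ i, g (p.2 i) ∂(ν.prod (Measure.pi fun _ => ν)) := by
              rw [this]
          _ = (∫ x, g x ∂ν) * ∫ x : Fin n → α, ∏ i, g (x i) ∂(Measure.pi fun _ => ν) :=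
              integral_prod_mul g (fun x : Fin n → α => ∏ i, g (x i))
          _ = (∫ x, g x ∂ν) ^ (n+1) := by rw [ih.2, pow_succ]; ring

lemma factor_bound {A δ m t : ℝ} (hA : 0 < A) (hδ : 0 < δ) (hm : 0 < m)
    (hmA : m ≤ A^2/4) (htdef : t = δ / (A * (4*A + δ))) :
    0 < t ∧ t*A < 1 ∧ t^2*m < 1 ∧
    rexp (-(t*δ)) * (Real.sqrt (1 - t^2*m))⁻¹ ≤ rexp (-(t*δ/2)) := by
  have hD : 0 < 4*A + δ := by linarith
  have ht : 0 < t := by rw [htdef]; positivity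
  have ht_eq : t * (A * (4*A + δ)) = δ := by
    rw [htdef]; field_simp
  have hu1 : t*A < 1 := by nlinarith [mul_pos ht hA]
  have h1 : t^2*m ≤ t^2*(A^2/4) := by nlinarith [sq_nonneg t]
  have hQ : t^2*m < 1 := by nlinarith [mul_pos ht hA, sq_nonneg (t*A)]
  have hQpos : 0 < 1 - t^2*m := by linarith
  refine ⟨ht, hu1, hQ, ?_⟩
  -- main inequality: exp(-tδ) ≤ 1 - t^2 m
  have e1 : 4*t*A^2 + t*A*δ = δ := by linear_combination ht_eq
  have e2 : t*δ = 4*t^2*A^2 + t^2*A*δ := by linear_combination (-t) * e1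
  have h3 : t^3*A^2*δ ≤ t^2*A*δ := by
    nlinarith [mul_le_mul_of_nonneg_right hu1.le (show (0:ℝ) ≤ t^2*A*δ by positivity)]
  have h4 : t^3*m*δ ≤ t^3*(A^2/4)*δ := by
    have := mul_le_mul_of_nonneg_right (mul_le_mul_of_nonneg_left hmA
      (show (0:ℝ) ≤ t^3 by positivity)) hδ.le
    linarith
  have hkey : 1 ≤ (1 - t^2*m) * (1 + t*δ) := by nlinarith [mul_pos ht hδ, sq_nonneg t]
  have hexpQ : rexp (-(t*δ)) ≤ 1 - t^2*m := by
    have h5 : 1 + t*δ ≤ rexp (t*δ) := by linarith [Real.add_one_le_exp (t*δ)]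
    have h6 : rexp (-(t*δ)) ≤ (1 + t*δ)⁻¹ := by
      rw [Real.exp_neg]
      exact inv_anti₀ (by positivity) h5
    have h7 : (1 + t*δ)⁻¹ ≤ 1 - t^2*m := by
      rw [inv_le_iff_one_le_mul₀ (by positivity)]
      linarith [hkey]
    linarith
  have hsq : rexp (-(t*δ/2)) ≤ Real.sqrt (1 - t^2*m) := by
    rw [Real.le_sqrt' (Real.exp_pos _)]
    calc rexp (-(t*δ/2))^2 = rexp (-(t*δ)) := by
          rw [sq, ← Real.exp_add]; ring_nf
      _ ≤ 1 - t^2*m := hexpQ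
  calc rexp (-(t*δ)) * (Real.sqrt (1 - t^2*m))⁻¹
      ≤ rexp (-(t*δ)) * (rexp (-(t*δ/2)))⁻¹ := by
        refine mul_le_mul_of_nonneg_left ?_ (Real.exp_pos _).le
        exact inv_anti₀ (Real.exp_pos _) hsq
    _ = rexp (-(t*δ/2)) := by
        rw [← Real.exp_neg, ← Real.exp_add]; ring_nf

theorem info_density_concentration (σ a : ℝ) (hσ : 0 < σ) (ha : 0 < a)
    (n : ℕ) (hn : 1 ≤ n) (δ : ℝ) (hδ : 0 < δ) :
    ((Measure.pi fun _ : Fin n => (gaussianReal 0 1).prod (gaussianReal 0 1))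
        {ω : Fin n → ℝ × ℝ |
          (n : ℝ) * δ ≤
            |∑ i, (a ^ 2 / (2 * (σ ^ 2 + a ^ 2)) * ((ω i).2 ^ 2 - (ω i).1 ^ 2)
              + σ * a / (σ ^ 2 + a ^ 2) * ((ω i).1 * (ω i).2))|}).toReal
      ≤ 2 * Real.exp (-(δ ^ 2 * n) /
          (2 * (4 * (2 * a * (σ + a) / (σ ^ 2 + a ^ 2)) ^ 2
            + δ * (2 * a * (σ + a) / (σ ^ 2 + a ^ 2))))) := by
  have hs : (0:ℝ) < σ ^ 2 + a ^ 2 := by positivity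
  set c : ℝ := a ^ 2 / (2 * (σ ^ 2 + a ^ 2)) with hc
  set d : ℝ := σ * a / (σ ^ 2 + a ^ 2) with hd
  set A : ℝ := 2 * a * (σ + a) / (σ ^ 2 + a ^ 2) with hA
  have hApos : 0 < A := by rw [hA]; positivity
  have hcpos : 0 < c := by rw [hc]; positivity
  have hdpos : 0 < d := by rw [hd]; positivity
  have hm : 4*c^2 + d^2 = a^2/(σ^2+a^2) := by
    rw [hc, hd]; field_simp; ring
  have hmpos : 0 < 4*c^2 + d^2 := by positivity
  have hmA : 4*c^2 + d^2 ≤ A^2/4 := by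
    have hdiff : A^2/4 - (4*c^2 + d^2) = a^2*(2*σ*a)/((σ^2+a^2)^2) := by
      rw [hA, hc, hd]; field_simp; ring
    have hge : (0:ℝ) ≤ a^2*(2*σ*a)/((σ^2+a^2)^2) := by positivity
    linarith
  have hcA : c ≤ A/4 := by
    have hdiff : A/4 - c = σ*a/(2*(σ^2+a^2)) := by
      rw [hA, hc]; field_simp; ring
    have hge : (0:ℝ) ≤ σ*a/(2*(σ^2+a^2)) := by positivity
    linarith
  set t : ℝ := δ / (A * (4*A + δ)) with htdef
  obtain ⟨ht, hu1, hQ, hbound⟩ := factor_bound hApos hδ hmpos hmA htdef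
  have htc : t * c < 1/2 := by nlinarith [mul_le_mul_of_nonneg_left hcA ht.le]
  have htcneg : (-t) * c < 1/2 := by nlinarith [mul_pos ht hcpos]
  have hQneg : (-t)^2 * (4*c^2 + d^2) < 1 := by rw [neg_pow]; simpa using hQ
  set ν : Measure (ℝ × ℝ) := (gaussianReal 0 1).prod (gaussianReal 0 1) with hν
  set P : Measure (Fin n → ℝ × ℝ) := Measure.pi fun _ => ν with hP
  set f : ℝ × ℝ → ℝ := fun p => c * (p.2^2 - p.1^2) + d * (p.1 * p.2) with hf
  set W : (Fin n → ℝ × ℝ) → ℝ := fun ω => ∑ i, f (ω i) with hW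
  obtain ⟨hIt, hMt⟩ := twoD htc hQ
  obtain ⟨hIneg, hMneg⟩ := twoD htcneg hQneg
  set M : ℝ := (Real.sqrt (1 - t^2 * (4*c^2 + d^2)))⁻¹ with hM
  have hMneg' : ∫ p, rexp ((-t) * (c * (p.2^2 - p.1^2) + d * (p.1 * p.2))) ∂ν = M := by
    rw [hMneg, hM, neg_pow]; norm_num
  have hMpos : 0 < M := by
    rw [hM]
    have : 0 < 1 - t^2 * (4*c^2 + d^2) := by linarith
    positivity
  -- exp of sum = product
  have hprod : ∀ (u : ℝ) (ω : Fin n → ℝ × ℝ),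
      rexp (u * W ω) = ∏ i, rexp (u * f (ω i)) := by
    intro u ω
    rw [hW, Finset.mul_sum, Real.exp_sum]
  -- integrability and integral of exp(u * W)
  have hexp_t := pi_prod_aux ν (g := fun p => rexp (t * f p)) hIt n
  have hexp_neg := pi_prod_aux ν (g := fun p => rexp ((-t) * f p)) hIneg n
  have hint_t : Integrable (fun ω => rexp (t * W ω)) P := by
    refine hexp_t.1.congr (Filter.Eventually.of_forall fun ω => ?_)
    exact (hprod t ω).symm
  have hint_neg : Integrable (fun ω => rexp ((-t) * W ω)) P := by
    refine hexp_neg.1.congr (Filter.Eventually.of_forall fun ω => ?_)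
    exact (hprod (-t) ω).symm
  have hmgf_t : mgf W P t = M ^ n := by
    have h1 : mgf W P t = ∫ ω, rexp (t * W ω) ∂P := rfl
    rw [h1, integral_congr_ae (Filter.Eventually.of_forall fun ω => hprod t ω), hexp_t.2, hMt]
  have hmgf_neg : mgf W P (-t) = M ^ n := by
    have h1 : mgf W P (-t) = ∫ ω, rexp ((-t) * W ω) ∂P := rfl
    rw [h1, integral_congr_ae (Filter.Eventually.of_forall fun ω => hprod (-t) ω), hexp_neg.2,
      hMneg']
  -- Chernoff bounds
  have hup : (P {ω | (n:ℝ)*δ ≤ W ω}).toReal ≤ rexp (-t * ((n:ℝ)*δ)) * M ^ n := by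
    have := measure_ge_le_exp_mul_mgf (μ := P) (X := W) ((n:ℝ)*δ) ht.le hint_t
    rwa [hmgf_t] at this
  have hlo : (P {ω | W ω ≤ -((n:ℝ)*δ)}).toReal ≤ rexp (-t * ((n:ℝ)*δ)) * M ^ n := by
    have := measure_le_le_exp_mul_mgf (μ := P) (X := W) (-((n:ℝ)*δ))
      (neg_nonpos.mpr ht.le) hint_neg
    rw [hmgf_neg, show - -t * -((n:ℝ)*δ) = -t * ((n:ℝ)*δ) by ring] at this
    exact this
  -- union bound
  have hsub : {ω : Fin n → ℝ × ℝ | (n:ℝ)*δ ≤ |W ω|}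
      ⊆ {ω | (n:ℝ)*δ ≤ W ω} ∪ {ω | W ω ≤ -((n:ℝ)*δ)} := by
    intro ω hω
    simp only [Set.mem_setOf_eq] at hω
    rcases le_abs.mp hω with h | h
    · exact Set.mem_union_left _ h
    · exact Set.mem_union_right _ (by simp only [Set.mem_setOf_eq]; linarith)
  have hunion : (P {ω : Fin n → ℝ × ℝ | (n:ℝ)*δ ≤ |W ω|}).toReal
      ≤ (P {ω | (n:ℝ)*δ ≤ W ω}).toReal + (P {ω | W ω ≤ -((n:ℝ)*δ)}).toReal := by
    have h1 : P {ω : Fin n → ℝ × ℝ | (n:ℝ)*δ ≤ |W ω|}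
        ≤ P {ω | (n:ℝ)*δ ≤ W ω} + P {ω | W ω ≤ -((n:ℝ)*δ)} :=
      (measure_mono hsub).trans (measure_union_le _ _)
    calc (P {ω : Fin n → ℝ × ℝ | (n:ℝ)*δ ≤ |W ω|}).toReal
        ≤ (P {ω | (n:ℝ)*δ ≤ W ω} + P {ω | W ω ≤ -((n:ℝ)*δ)}).toReal :=
          ENNReal.toReal_mono (ENNReal.add_ne_top.mpr ⟨measure_ne_top _ _, measure_ne_top _ _⟩) h1
      _ = _ := ENNReal.toReal_add (measure_ne_top _ _) (measure_ne_top _ _)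
  -- final computation
  have hfinal : rexp (-t * ((n:ℝ)*δ)) * M ^ n ≤ rexp (-(δ^2*n) / (2*(4*A^2 + δ*A))) := by
    have h1 : rexp (-t * ((n:ℝ)*δ)) * M ^ n = (rexp (-(t*δ)) * M) ^ n := by
      rw [mul_pow, ← Real.exp_nat_mul]
      congr 1
      ring
    have h2 : (rexp (-(t*δ)) * M) ^ n ≤ rexp (-(t*δ/2)) ^ n := by
      refine pow_le_pow_left₀ (by positivity) ?_ n
      exact hbound
    have h3 : rexp (-(t*δ/2)) ^ n = rexp (-(δ^2*n) / (2*(4*A^2 + δ*A))) := by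
      rw [← Real.exp_nat_mul]
      congr 1
      rw [htdef]
      have h4A : A * (4*A + δ) ≠ 0 := by positivity
      field_simp
    rw [h1, ← h3]
    exact h2
  calc (P {ω : Fin n → ℝ × ℝ | (n:ℝ)*δ ≤ |W ω|}).toReal
      ≤ (P {ω | (n:ℝ)*δ ≤ W ω}).toReal + (P {ω | W ω ≤ -((n:ℝ)*δ)}).toReal := hunion
    _ ≤ rexp (-t * ((n:ℝ)*δ)) * M ^ n + rexp (-t * ((n:ℝ)*δ)) * M ^ n := add_le_add hup hlo
    _ = 2 * (rexp (-t * ((n:ℝ)*δ)) * M ^ n) := by ring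
    _ ≤ 2 * rexp (-(δ^2*n) / (2*(4*A^2 + δ*A))) := by linarith [hfinal]
end

section
/- Let n ≥ 1 and k ≥ 1 be integers, let c ≥ 0 be a real, and let X be a random n×k matrix whose entries are i.i.d. standard normal N(0,1). Then E[ log det( I_k + c · Xᵀ X ) ] ≤ k · log( 1 + c·n ), where I_k is the k×k identity matrix. -/
open MeasureTheory ProbabilityTheory Matrix

open scoped ENNReal NNReal Real

section Aux

open Real Set

private lemma aux_integral_sq_exp :
    ∫ x : ℝ, x ^ 2 * Real.exp (-(1/2) * x ^ 2) = Real.sqrt (2 * π) := by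
  have hint : Integrable (fun x : ℝ => x ^ 2 * Real.exp (-(1/2) * x ^ 2)) := by
    have := integrable_rpow_mul_exp_neg_mul_sq (b := 1/2) (by norm_num) (s := 2) (by norm_num)
    simpa [Real.rpow_natCast] using this
  have hIoi : ∫ x in Ioi (0:ℝ), x ^ 2 * Real.exp (-(1/2) * x ^ 2) = Real.sqrt (2 * π) / 2 := by
    have := integral_rpow_mul_exp_neg_mul_rpow (p := 2) (q := 2) (b := 1/2)
      (by norm_num) (by norm_num) (by norm_num)
    rw [show ((2:ℝ)+1)/2 = 1/2 + 1 by norm_num, Real.Gamma_add_one (by norm_num),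
      Real.Gamma_one_half_eq] at this
    have h2 : ∫ x in Ioi (0:ℝ), x ^ 2 * Real.exp (-(1/2) * x ^ 2)
        = ∫ x in Ioi (0:ℝ), x ^ (2:ℝ) * Real.exp (-(1/2) * x ^ (2:ℝ)) := by
      refine setIntegral_congr_fun measurableSet_Ioi (fun x hx => ?_)
      rw [← Real.rpow_natCast x 2]; norm_num
    rw [h2, this]
    rw [show (-((2:ℝ)+1)/2) = -(3/2 : ℝ) by norm_num]
    rw [Real.rpow_neg (by norm_num), show ((1:ℝ)/2) = 2⁻¹ by norm_num, Real.inv_rpow (by norm_num),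
      inv_inv, show ((3:ℝ)/2) = 1 + 1/2 by norm_num, Real.rpow_add (by norm_num), Real.rpow_one,
      ← Real.sqrt_eq_rpow, Real.sqrt_mul (by norm_num)]
    ring
  have hsplit : ∫ x : ℝ, x ^ 2 * Real.exp (-(1/2) * x ^ 2)
      = (∫ x in Iic (0:ℝ), x ^ 2 * Real.exp (-(1/2) * x ^ 2))
        + ∫ x in Ioi (0:ℝ), x ^ 2 * Real.exp (-(1/2) * x ^ 2) :=
    (intervalIntegral.integral_Iic_add_Ioi hint.integrableOn hint.integrableOn).symm
  have hneg : ∫ x in Iic (0:ℝ), x ^ 2 * Real.exp (-(1/2) * x ^ 2)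
      = ∫ x in Ioi (0:ℝ), x ^ 2 * Real.exp (-(1/2) * x ^ 2) := by
    rw [← neg_zero, ← integral_comp_neg_Ioi]
    simp
  rw [hsplit, hneg, hIoi]; ring

private lemma aux_pdf_mul_sq (x : ℝ) :
    gaussianPDFReal 0 1 x * x ^ 2
      = (Real.sqrt (2 * π))⁻¹ * (x ^ 2 * Real.exp (-(1/2) * x ^ 2)) := by
  unfold gaussianPDFReal
  push_cast
  ring_nf

private lemma aux_integrable_pdf_sq :
    Integrable (fun x : ℝ => gaussianPDFReal 0 1 x * x ^ 2) := by
  simp_rw [aux_pdf_mul_sq]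
  refine Integrable.const_mul ?_ _
  have := integrable_rpow_mul_exp_neg_mul_sq (b := 1/2) (by norm_num) (s := 2) (by norm_num)
  simpa [Real.rpow_natCast] using this

private lemma aux_integrable_sq_gaussian :
    Integrable (fun x : ℝ => x ^ 2) (gaussianReal 0 1) := by
  rw [gaussianReal_of_var_ne_zero 0 one_ne_zero, gaussianPDF_def]
  have hmeas : Measurable fun x => (gaussianPDFReal 0 1 x).toNNReal :=
    (measurable_gaussianPDFReal 0 1).real_toNNReal
  rw [show (fun x => ENNReal.ofReal (gaussianPDFReal 0 1 x))
      = (fun x => ((gaussianPDFReal 0 1 x).toNNReal : ℝ≥0∞)) from rfl]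
  rw [integrable_withDensity_iff_integrable_smul hmeas]
  refine aux_integrable_pdf_sq.congr (Filter.Eventually.of_forall fun x => ?_)
  simp only [NNReal.smul_def, smul_eq_mul, Real.coe_toNNReal _ (gaussianPDFReal_nonneg 0 1 x)]

private lemma aux_integral_sq_gaussian : ∫ x, x ^ 2 ∂(gaussianReal 0 1) = 1 := by
  rw [gaussianReal_of_var_ne_zero 0 one_ne_zero, gaussianPDF_def]
  have hmeas : Measurable fun x => (gaussianPDFReal 0 1 x).toNNReal :=
    (measurable_gaussianPDFReal 0 1).real_toNNReal
  rw [show (fun x => ENNReal.ofReal (gaussianPDFReal 0 1 x))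
      = (fun x => ((gaussianPDFReal 0 1 x).toNNReal : ℝ≥0∞)) from rfl]
  rw [integral_withDensity_eq_integral_smul hmeas]
  have : ∀ x : ℝ, (gaussianPDFReal 0 1 x).toNNReal • x ^ 2
      = (Real.sqrt (2 * π))⁻¹ * (x ^ 2 * Real.exp (-(1/2) * x ^ 2)) := by
    intro x
    rw [NNReal.smul_def, smul_eq_mul, Real.coe_toNNReal _ (gaussianPDFReal_nonneg 0 1 x),
      aux_pdf_mul_sq]
  simp_rw [this]
  rw [integral_const_mul, aux_integral_sq_exp, inv_mul_cancel₀]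
  positivity

private lemma aux_pi_map_eval {ι : Type*} [Fintype ι] [DecidableEq ι] {α : ι → Type*}
    [∀ i, MeasurableSpace (α i)] (μ : ∀ i, Measure (α i)) [∀ i, IsProbabilityMeasure (μ i)]
    (i : ι) : (Measure.pi μ).map (Function.eval i) = μ i := by
  ext s hs
  rw [Measure.map_apply (measurable_pi_apply i) hs]
  have hpre : Function.eval i ⁻¹' s
      = Set.pi Set.univ (Function.update (fun j => Set.univ) i s) := by
    ext x
    simp only [Set.mem_preimage, Set.mem_pi, Set.mem_univ, forall_true_left, Function.update_apply]
    constructor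
    · intro hx j
      by_cases hj : j = i
      · subst hj; simp [hx]
      · simp [hj]
    · intro hx
      have := hx i
      simpa using this
  rw [hpre, Measure.pi_pi]
  rw [Finset.prod_eq_single i (fun j _ hj => by simp [Function.update_of_ne hj])
    (fun h => absurd (Finset.mem_univ i) h)]
  simp

variable {n k : ℕ}

private noncomputable abbrev auxP (n k : ℕ) : Measure (Fin n → Fin k → ℝ) :=
  Measure.pi fun _ : Fin n => Measure.pi fun _ : Fin k => gaussianReal 0 1

private lemma aux_coord_map (i : Fin n) (j : Fin k) :
    (auxP n k).map (fun ω => ω i j) = gaussianReal 0 1 := by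
  have h1 : (fun ω : Fin n → Fin k → ℝ => ω i j)
      = (Function.eval j : (Fin k → ℝ) → ℝ) ∘ (Function.eval i) := rfl
  rw [h1, ← Measure.map_map (measurable_pi_apply j) (measurable_pi_apply i),
    aux_pi_map_eval, aux_pi_map_eval]

private lemma aux_meas_coord (i : Fin n) (j : Fin k) :
    Measurable (fun ω : Fin n → Fin k → ℝ => ω i j) :=
  (measurable_pi_apply j).comp (measurable_pi_apply i)

private lemma aux_integrable_coord_sq (i : Fin n) (j : Fin k) :
    Integrable (fun ω : Fin n → Fin k → ℝ => (ω i j) ^ 2) (auxP n k) := by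
  have := (integrable_map_measure (μ := auxP n k)
    (f := fun ω : Fin n → Fin k → ℝ => ω i j) (g := fun x : ℝ => x ^ 2)
    (by exact (measurable_id.pow_const 2).aestronglyMeasurable)
    (aux_meas_coord i j).aemeasurable).mp
  rw [aux_coord_map] at this
  exact this aux_integrable_sq_gaussian

private lemma aux_integral_coord_sq (i : Fin n) (j : Fin k) :
    ∫ ω, (ω i j) ^ 2 ∂(auxP n k) = 1 := by
  have := integral_map (μ := auxP n k) (φ := fun ω => ω i j) (aux_meas_coord i j).aemeasurable
    (f := fun x : ℝ => x ^ 2) (by exact (measurable_id.pow_const 2).aestronglyMeasurable)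
  rw [aux_coord_map] at this
  rw [← this, aux_integral_sq_gaussian]

private lemma aux_integrable_T : Integrable
    (fun ω : Fin n → Fin k → ℝ => ∑ i, ∑ j, (ω i j) ^ 2) (auxP n k) :=
  integrable_finset_sum _ fun i _ =>
    integrable_finset_sum _ fun j _ => aux_integrable_coord_sq i j

private lemma aux_integral_T :
    ∫ ω, (∑ i, ∑ j, (ω i j) ^ 2) ∂(auxP n k) = (n : ℝ) * k := by
  rw [integral_finset_sum _ fun i _ =>
    integrable_finset_sum _ fun j _ => aux_integrable_coord_sq i j]
  simp_rw [integral_finset_sum _ fun j _ => aux_integrable_coord_sq _ j, aux_integral_coord_sq]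
  simp [mul_comm]

private lemma aux_trace_eq_sum_eigenvalues {k : ℕ} {M : Matrix (Fin k) (Fin k) ℝ}
    (hM : M.IsHermitian) : M.trace = ∑ i, hM.eigenvalues i := by
  nth_rewrite 1 [hM.spectral_theorem]
  rw [Unitary.conjStarAlgAut_apply]
  rw [Matrix.trace_mul_cycle]
  have h1 : (star (hM.eigenvectorUnitary : Matrix (Fin k) (Fin k) ℝ))
      * (hM.eigenvectorUnitary : Matrix (Fin k) (Fin k) ℝ) = 1 := by
    simpa using (Matrix.mem_unitaryGroup_iff').mp (hM.eigenvectorUnitary).2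
  rw [h1, Matrix.one_mul, Matrix.trace_diagonal]
  simp

private lemma aux_log_det_le {k : ℕ} (hk : 1 ≤ k) {M : Matrix (Fin k) (Fin k) ℝ}
    (hM : M.PosDef) : Real.log M.det ≤ (k : ℝ) * Real.log (M.trace / k) := by
  have hherm := hM.isHermitian
  set lam := hherm.eigenvalues with hlam
  have hpos : ∀ i, 0 < lam i := hM.eigenvalues_pos
  have hdet : M.det = ∏ i, lam i := by
    rw [hherm.det_eq_prod_eigenvalues]; norm_num; rfl
  have hk0 : (0:ℝ) < k := by exact_mod_cast hk
  have hjensen : ∑ i, ((k:ℝ))⁻¹ • Real.log (lam i)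
      ≤ Real.log (∑ i, ((k:ℝ))⁻¹ • lam i) := by
    refine (strictConcaveOn_log_Ioi.concaveOn).le_map_sum
      (fun i _ => by positivity) ?_ (fun i _ => hpos i)
    simp [Finset.sum_const, Finset.card_univ, hk0.ne']
  have hlog : Real.log M.det = ∑ i, Real.log (lam i) := by
    rw [hdet, Real.log_prod (fun i _ => (hpos i).ne')]
  have hsum : ∑ i, ((k:ℝ))⁻¹ • lam i = M.trace / k := by
    rw [aux_trace_eq_sum_eigenvalues hherm, ← Finset.smul_sum]
    simp [div_eq_inv_mul, hlam]
  rw [hlog]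
  calc ∑ i, Real.log (lam i) = (k:ℝ) * ∑ i, ((k:ℝ))⁻¹ • Real.log (lam i) := by
        rw [← Finset.smul_sum, smul_eq_mul, ← mul_assoc, mul_inv_cancel₀ hk0.ne', one_mul]
    _ ≤ (k:ℝ) * Real.log (∑ i, ((k:ℝ))⁻¹ • lam i) :=
        mul_le_mul_of_nonneg_left hjensen hk0.le
    _ = (k:ℝ) * Real.log (M.trace / k) := by rw [hsum]

private lemma aux_posdef_one_add {c : ℝ} (hc : 0 ≤ c) (A : Matrix (Fin n) (Fin k) ℝ) :
    (1 + c • (Aᵀ * A)).PosDef := by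
  refine Matrix.PosDef.add_posSemidef Matrix.PosDef.one ?_
  have hps : (Aᵀ * A).PosSemidef := by
    have := Matrix.posSemidef_conjTranspose_mul_self A
    rwa [Matrix.conjTranspose_eq_transpose_of_trivial] at this
  exact ⟨by
      have := hps.isHermitian
      unfold Matrix.IsHermitian at *
      rw [Matrix.conjTranspose_smul, this]
      simp,
    fun x => by
      have hx : (x.sum fun i xi => x.sum fun j xj => star xi * (c • (Aᵀ * A)) i j * xj)
          = c * (x.sum fun i xi => x.sum fun j xj => star xi * (Aᵀ * A) i j * xj) := by
        simp only [Finsupp.sum, Finset.mul_sum, Matrix.smul_apply, smul_eq_mul]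
        exact Finset.sum_congr rfl fun i _ => Finset.sum_congr rfl fun j _ => by ring
      rw [hx]
      exact mul_nonneg hc (hps.2 x)⟩

private lemma aux_trace_eq (c : ℝ) (A : Matrix (Fin n) (Fin k) ℝ) :
    (1 + c • (Aᵀ * A)).trace = k + c * ∑ i, ∑ j, (A i j) ^ 2 := by
  rw [Matrix.trace_add, Matrix.trace_smul, Matrix.trace_one, smul_eq_mul, Fintype.card_fin]
  congr 1
  rw [show (Aᵀ * A).trace = ∑ j, ∑ i, Aᵀ j i * A i j from by
    simp [Matrix.trace, Matrix.diag, Matrix.mul_apply]]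
  rw [Finset.sum_comm]
  simp [sq]

end Aux

theorem expected_log_det_bound (n k : ℕ) (hn : 1 ≤ n) (hk : 1 ≤ k)
    (c : ℝ) (hc : 0 ≤ c) :
    (∫ ω : Fin n → Fin k → ℝ,
        Real.log (Matrix.det (1 + c • ((Matrix.of ω)ᵀ * Matrix.of ω)))
        ∂(Measure.pi fun _ : Fin n => Measure.pi fun _ : Fin k => gaussianReal 0 1))
      ≤ (k : ℝ) * Real.log (1 + c * n) := by
  set b : ℝ := 1 + c * n with hb
  have hb0 : (0:ℝ) < b := by
    have : (0:ℝ) ≤ c * n := mul_nonneg hc (Nat.cast_nonneg n)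
    linarith
  have hb1 : (1:ℝ) ≤ b := by
    have : (0:ℝ) ≤ c * n := mul_nonneg hc (Nat.cast_nonneg n)
    linarith
  have hk0 : (0:ℝ) < k := by exact_mod_cast hk
  set T : (Fin n → Fin k → ℝ) → ℝ := fun ω => ∑ i, ∑ j, (ω i j) ^ 2 with hT
  have hTnn : ∀ ω, 0 ≤ T ω := fun ω =>
    Finset.sum_nonneg fun i _ => Finset.sum_nonneg fun j _ => sq_nonneg _
  set f : (Fin n → Fin k → ℝ) → ℝ := fun ω =>
    Real.log (Matrix.det (1 + c • ((Matrix.of ω)ᵀ * Matrix.of ω))) with hf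
  set h : (Fin n → Fin k → ℝ) → ℝ := fun ω =>
    (k : ℝ) * Real.log b + (c / b) * (T ω - n * k) with hh
  -- pointwise bound
  have hpt : ∀ ω, f ω ≤ h ω := by
    intro ω
    have hPD := aux_posdef_one_add hc (Matrix.of ω)
    have h1 : f ω ≤ (k : ℝ) * Real.log ((1 + c • ((Matrix.of ω)ᵀ * Matrix.of ω)).trace / k) :=
      aux_log_det_le hk hPD
    have htr : (1 + c • ((Matrix.of ω)ᵀ * Matrix.of ω)).trace = k + c * T ω := by
      rw [aux_trace_eq]
      rfl
    have ha0 : (0:ℝ) < (k + c * T ω) / k := by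
      have : 0 ≤ c * T ω := mul_nonneg hc (hTnn ω)
      positivity
    have hlog2 : Real.log ((k + c * T ω) / k) ≤ Real.log b + ((k + c * T ω) / k - b) / b := by
      have := Real.log_le_sub_one_of_pos (x := ((k + c * T ω) / k) / b) (by positivity)
      rw [Real.log_div ha0.ne' hb0.ne'] at this
      have h2 : ((k + c * T ω) / k) / b - 1 = ((k + c * T ω) / k - b) / b := by
        field_simp
      linarith [this, h2]
    have h3 : (k:ℝ) * (Real.log b + ((k + c * T ω) / k - b) / b) = h ω := by
      rw [hh]
      have : (k:ℝ) * (((k + c * T ω) / k - b) / b) = (c / b) * (T ω - n * k) := by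
        field_simp
        ring
      rw [mul_add, this]
    calc f ω ≤ (k : ℝ) * Real.log ((k + c * T ω) / k) := by rw [← htr]; exact h1
      _ ≤ (k:ℝ) * (Real.log b + ((k + c * T ω) / k - b) / b) :=
          mul_le_mul_of_nonneg_left hlog2 hk0.le
      _ = h ω := h3
  -- integrability of h
  have hInth : Integrable h (auxP n k) := by
    refine Integrable.add (integrable_const _) ?_
    exact ((aux_integrable_T.sub (integrable_const _)).const_mul _)
  have hint2 : Integrable (fun ω : Fin n → Fin k → ℝ => (c / b) * (T ω - (n:ℝ) * k))
      (auxP n k) := (aux_integrable_T.sub (integrable_const _)).const_mul _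
  have hIh : ∫ ω, h ω ∂(auxP n k) = (k : ℝ) * Real.log b := by
    rw [hh]
    rw [integral_add (integrable_const _) hint2, integral_const, integral_const_mul,
      integral_sub aux_integrable_T (integrable_const _), aux_integral_T, integral_const]
    simp
  by_cases hfi : Integrable f (auxP n k)
  · calc (∫ ω, f ω ∂(auxP n k)) ≤ ∫ ω, h ω ∂(auxP n k) := integral_mono hfi hInth hpt
      _ = (k : ℝ) * Real.log b := hIh
  · rw [integral_undef hfi]
    exact mul_nonneg hk0.le (Real.log_nonneg hb1)
end
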